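/- arXiv:2411.14597 — 2 statements merged into one kernel-verified Lean document; each statement's English description precedes it below -/
import Mathlib

section
/- Let A be the adjacency matrix of the subgraph of the Hamming cube \{0,1\}^n induced by the Hamming ball B(n,r) of radius r \le n/2 around 0. Then the maximal eigenvalue of A equals n - 2x, where x is the smallest root of the Krawtchouk polynomial K_{r+1}^{(n)}, this eigenvalue has multiplicity 1, and a corresponding eigenfunction can be chosen strictly positive and spherical (its value at a point depends only on the Hamming weight of the point). -/
/-- Generalized binomial coefficient `x choose l` as a real number. -/
noncomputable def gchoose (x : ℝ) (l : ℕ) : ℝ :=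
  (∏ i ∈ Finset.range l, (x - i)) / (Nat.factorial l)

/-- Krawtchouk polynomial `K_j^{(n)}(x)`. -/
noncomputable def kraw (n j : ℕ) (x : ℝ) : ℝ :=
  ∑ l ∈ Finset.range (j + 1), (-1 : ℝ) ^ l * gchoose x l * gchoose ((n : ℝ) - x) (j - l)

/-- Hamming weight of a Boolean vector. -/
def wt {n : ℕ} (x : Fin n → Bool) : ℕ :=
  (Finset.univ.filter (fun i => x i = true)).card

/-- Adjacency matrix of the subgraph of the Hamming cube induced by the
Hamming ball of radius `r` around `0`. -/
def ballAdj (n r : ℕ) :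
    Matrix {x : Fin n → Bool // wt x ≤ r} {x : Fin n → Bool // wt x ≤ r} ℝ :=
  fun u v => if hammingDist u.1 v.1 = 1 then 1 else 0

open Finset

lemma gchoose_zero (x : ℝ) : gchoose x 0 = 1 := by simp [gchoose]

lemma gchoose_succ (x : ℝ) (l : ℕ) :
    ((l : ℝ) + 1) * gchoose x (l + 1) = (x - l) * gchoose x l := by
  have h : (Nat.factorial (l + 1) : ℝ) = ((l : ℝ) + 1) * (Nat.factorial l) := by
    push_cast [Nat.factorial_succ]; ring
  have h1 : (Nat.factorial l : ℝ) ≠ 0 := Nat.cast_ne_zero.2 (Nat.factorial_ne_zero l)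
  have h2 : ((l : ℝ) + 1) ≠ 0 := by positivity
  simp only [gchoose, Finset.prod_range_succ, h]
  field_simp

lemma kraw_zero (n : ℕ) (x : ℝ) : kraw n 0 x = 1 := by
  simp [kraw, gchoose_zero]

lemma kraw_one (n : ℕ) (x : ℝ) : kraw n 1 x = (n : ℝ) - 2 * x := by
  have h0 := gchoose_succ ((n : ℝ) - x) 0
  have h1 := gchoose_succ x 0
  simp [gchoose_zero] at h0 h1
  simp [kraw, Finset.sum_range_succ, gchoose_zero, h0, h1]
  ring

noncomputable def krS (n j : ℕ) (x : ℝ) : ℝ :=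
  ∑ l ∈ Finset.range (j + 1),
    (-1 : ℝ) ^ l * ((j : ℝ) - 2 * l) * gchoose x l * gchoose ((n : ℝ) - x) (j - l)

lemma krI1 (n j : ℕ) (x : ℝ) :
    ((n : ℝ) - 2 * x) * kraw n j x = ((j : ℝ) + 1) * kraw n (j + 1) x + krS n j x := by
  have expand : ((j : ℝ) + 1) * kraw n (j + 1) x
      = (∑ l ∈ range (j + 1), ((j : ℝ) + 1 - l) * ((-1:ℝ) ^ l * gchoose x l *
          gchoose ((n : ℝ) - x) ((j - l) + 1)))
        + ∑ l ∈ range (j + 1), ((l : ℝ) + 1) * ((-1:ℝ) ^ (l+1) * gchoose x (l+1) *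
          gchoose ((n : ℝ) - x) (j - l)) := by
    rw [kraw, Finset.mul_sum]
    have split : ∀ l ∈ range (j + 2), ((j : ℝ) + 1) * ((-1:ℝ) ^ l * gchoose x l *
        gchoose ((n : ℝ) - x) (j + 1 - l))
        = (((j + 1 - l : ℕ) : ℝ)) * ((-1:ℝ) ^ l * gchoose x l * gchoose ((n : ℝ) - x) (j + 1 - l))
          + (l : ℝ) * ((-1:ℝ) ^ l * gchoose x l * gchoose ((n : ℝ) - x) (j + 1 - l)) := by
      intro l hl
      rw [mem_range] at hl
      have : ((j + 1 - l : ℕ) : ℝ) = (j : ℝ) + 1 - l := by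
        have : l ≤ j + 1 := by omega
        push_cast [Nat.cast_sub this]; ring
      rw [this]; ring
    rw [Finset.sum_congr rfl split, Finset.sum_add_distrib]
    congr 1
    · rw [Finset.sum_range_succ]
      simp only [Nat.sub_self, Nat.cast_zero, zero_mul, add_zero]
      apply Finset.sum_congr rfl
      intro l hl
      rw [mem_range] at hl
      have h1 : ((j + 1 - l : ℕ) : ℝ) = (j : ℝ) + 1 - l := by
        have : l ≤ j + 1 := by omega
        push_cast [Nat.cast_sub this]; ring
      have h2 : j + 1 - l = (j - l) + 1 := by omega
      rw [h1, h2]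
    · rw [Finset.sum_range_succ']
      simp only [Nat.cast_zero, zero_mul, add_zero]
      apply Finset.sum_congr rfl
      intro l hl
      have h2 : j + 1 - (l + 1) = j - l := by omega
      rw [h2]; push_cast; ring
  rw [expand, kraw, krS, Finset.mul_sum, ← Finset.sum_add_distrib, ← Finset.sum_add_distrib]
  apply Finset.sum_congr rfl
  intro l hl
  rw [mem_range] at hl
  have hcast : ((j - l : ℕ) : ℝ) = (j : ℝ) - l := by
    have : l ≤ j := by omega
    push_cast [Nat.cast_sub this]; ring
  have f2 := gchoose_succ ((n : ℝ) - x) (j - l)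
  rw [hcast] at f2
  have f1 := gchoose_succ x l
  linear_combination (-((-1:ℝ) ^ l * gchoose x l)) * f2 + ((-1:ℝ) ^ l * gchoose ((n:ℝ)-x) (j-l)) * f1

lemma krI2 (n j : ℕ) (x : ℝ) :
    krS n (j + 1) x = ((n : ℝ) - j) * kraw n j x := by
  have split : ∀ l ∈ range (j + 1 + 1), (-1:ℝ) ^ l * (((j + 1 : ℕ) : ℝ) - 2 * l) * gchoose x l *
      gchoose ((n : ℝ) - x) (j + 1 - l)
      = (((j + 1 - l : ℕ) : ℝ)) * ((-1:ℝ) ^ l * gchoose x l * gchoose ((n:ℝ)-x) (j + 1 - l))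
        - (l : ℝ) * ((-1:ℝ) ^ l * gchoose x l * gchoose ((n:ℝ)-x) (j + 1 - l)) := by
    intro l hl
    rw [mem_range] at hl
    have h1 : ((j + 1 - l : ℕ) : ℝ) = (j : ℝ) + 1 - l := by
      have : l ≤ j + 1 := by omega
      push_cast [Nat.cast_sub this]; ring
    rw [h1]; push_cast; ring
  rw [krS, Finset.sum_congr rfl split, Finset.sum_sub_distrib]
  have sum1 : ∑ l ∈ range (j + 1 + 1), (((j + 1 - l : ℕ) : ℝ)) * ((-1:ℝ) ^ l * gchoose x l *
      gchoose ((n:ℝ)-x) (j + 1 - l))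
      = ∑ l ∈ range (j + 1), ((n:ℝ) - x - ((j:ℝ) - l)) *
          ((-1:ℝ) ^ l * gchoose x l * gchoose ((n:ℝ)-x) (j - l)) := by
    rw [Finset.sum_range_succ]
    simp only [Nat.sub_self, Nat.cast_zero, zero_mul, add_zero]
    apply Finset.sum_congr rfl
    intro l hl
    rw [mem_range] at hl
    have hle : l ≤ j := by omega
    have hcast : ((j - l : ℕ) : ℝ) = (j : ℝ) - l := by push_cast [Nat.cast_sub hle]; ring
    have h1 : ((j + 1 - l : ℕ) : ℝ) = ((j - l : ℕ) : ℝ) + 1 := by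
      have : j + 1 - l = (j - l) + 1 := by omega
      rw [this]; push_cast; ring
    have h2 : j + 1 - l = (j - l) + 1 := by omega
    have f2 := gchoose_succ ((n : ℝ) - x) (j - l)
    rw [h1, h2, hcast] at *
    linear_combination ((-1:ℝ) ^ l * gchoose x l) * f2
  have sum2 : ∑ l ∈ range (j + 1 + 1), (l : ℝ) * ((-1:ℝ) ^ l * gchoose x l *
      gchoose ((n:ℝ)-x) (j + 1 - l))
      = ∑ l ∈ range (j + 1), (-(x - l)) * ((-1:ℝ) ^ l * gchoose x l *
          gchoose ((n:ℝ)-x) (j - l)) := by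
    rw [Finset.sum_range_succ']
    simp only [Nat.cast_zero, zero_mul, add_zero]
    apply Finset.sum_congr rfl
    intro l hl
    have h2 : j + 1 - (l + 1) = j - l := by omega
    rw [h2]
    have f1 := gchoose_succ x l
    push_cast
    linear_combination ((-1:ℝ) ^ (l+1) * gchoose ((n:ℝ)-x) (j-l)) * f1
  rw [sum1, sum2, kraw, Finset.mul_sum, ← Finset.sum_sub_distrib]
  apply Finset.sum_congr rfl
  intro l hl
  ring

lemma kraw_rec (n j : ℕ) (x : ℝ) :
    ((j : ℝ) + 2) * kraw n (j + 2) x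
      = ((n : ℝ) - 2 * x) * kraw n (j + 1) x - ((n : ℝ) - j) * kraw n j x := by
  have h1 := krI1 n (j + 1) x
  have h2 := krI2 n j x
  push_cast at h1
  linear_combination -h1 - h2

lemma gchoose_nat (n k : ℕ) : gchoose (n : ℝ) k = n.choose k := by
  induction k with
  | zero => simp [gchoose]
  | succ k ih =>
    by_cases h : k < n
    · have h1 := gchoose_succ (n : ℝ) k
      have h2 : ((k : ℝ) + 1) * (n.choose (k + 1) : ℝ) = (n.choose k : ℝ) * ((n : ℝ) - k) := by
        have := Nat.choose_succ_right_eq n k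
        have hc : ((n.choose (k+1) * (k+1) : ℕ) : ℝ) = ((n.choose k * (n - k) : ℕ) : ℝ) := by
          exact_mod_cast congrArg (Nat.cast (R := ℝ)) this
        push_cast [Nat.cast_sub h.le] at hc
        linarith
      have hk : ((k : ℝ) + 1) ≠ 0 := by positivity
      apply mul_left_cancel₀ hk
      rw [h1, ih, h2]; ring
    · push_neg at h
      have hg : gchoose (n : ℝ) (k + 1) = 0 := by
        have : ((n : ℝ) - n) = 0 := by ring
        simp only [gchoose]
        rw [Finset.prod_eq_zero (Finset.mem_range.2 (by omega : n < k + 1)) (by simp)]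
        simp
      rw [hg, Nat.choose_eq_zero_of_lt (by omega)]
      simp

lemma gchoose_zero_left (l : ℕ) (hl : 0 < l) : gchoose 0 l = 0 := by
  simp only [gchoose]
  rw [Finset.prod_eq_zero (Finset.mem_range.2 hl) (by simp)]
  simp

lemma kraw_at_zero (n j : ℕ) : kraw n j 0 = n.choose j := by
  rw [kraw, Finset.sum_eq_single_of_mem 0 (Finset.mem_range.2 (by omega))]
  · have h00 : gchoose 0 0 = 1 := by simp [gchoose]
    simp only [pow_zero, one_mul, Nat.sub_zero, sub_zero, h00]
    exact gchoose_nat n j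
  · intro l _ hl
    rw [gchoose_zero_left l (Nat.pos_of_ne_zero hl)]
    ring

lemma gchoose_pos_of_le (y : ℝ) (m : ℕ) (h : ∀ i : ℕ, i < m → 0 < y - i) : 0 < gchoose y m := by
  rw [gchoose]
  apply div_pos
  · exact Finset.prod_pos fun i hi => h i (Finset.mem_range.1 hi)
  · exact_mod_cast Nat.factorial_pos m

lemma kraw_pos_of_neg (n j : ℕ) (hj : j ≤ n) (x : ℝ) (hx : x < 0) : 0 < kraw n j x := by
  rw [kraw]
  apply Finset.sum_pos
  · intro l hl
    rw [Finset.mem_range] at hl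
    have h1 : 0 < (-1 : ℝ) ^ l * gchoose x l := by
      rw [gchoose, ← mul_div_assoc]
      apply div_pos
      · have h3 : ∏ i ∈ Finset.range l, ((i:ℝ) - x) = ∏ i ∈ Finset.range l, (-1 : ℝ) * (x - i) :=
          Finset.prod_congr rfl (by intro i _; ring)
        have : (-1 : ℝ) ^ l * ∏ i ∈ Finset.range l, (x - i) = ∏ i ∈ Finset.range l, ((i : ℝ) - x) := by
          rw [h3, Finset.prod_mul_distrib, Finset.prod_const, Finset.card_range]
        rw [this]
        apply Finset.prod_pos
        intro i _
        have : (0:ℝ) ≤ i := Nat.cast_nonneg i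
        linarith
      · exact_mod_cast Nat.factorial_pos l
    have h2 : 0 < gchoose ((n : ℝ) - x) (j - l) := by
      apply gchoose_pos_of_le
      intro i hi
      have hin : i < n := by omega
      have : (i : ℝ) < n := by exact_mod_cast hin
      linarith
    calc (0:ℝ) < ((-1:ℝ)^l * gchoose x l) * gchoose ((n : ℝ) - x) (j - l) :=
          mul_pos h1 h2
      _ = (-1:ℝ)^l * gchoose x l * gchoose ((n : ℝ) - x) (j - l) := by ring
  · exact ⟨0, Finset.mem_range.2 (by omega)⟩

lemma continuous_kraw (n j : ℕ) : Continuous fun x => kraw n j x := by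
  apply continuous_finset_sum
  intro l _
  apply Continuous.mul
  · apply Continuous.mul continuous_const
    exact ((continuous_finset_prod _ (fun i _ => by continuity)).div_const _)
  · exact ((continuous_finset_prod _ (fun i _ => by continuity)).div_const _)

lemma root_pos (n j : ℕ) (hj : j ≤ n) (hn : 0 < n.choose j) (x : ℝ) (hx : kraw n j x = 0) :
    0 < x := by
  rcases lt_trichotomy x 0 with h | h | h
  · exact absurd hx (ne_of_gt (kraw_pos_of_neg n j hj x h))
  · rw [h, kraw_at_zero] at hx
    exact absurd hx (by exact_mod_cast hn.ne')
  · exact h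

lemma kraw_pos_on (n r : ℕ) (hn : 0 < n) (hr : 2 * r ≤ n) (x₀ : ℝ)
    (hroot : kraw n (r + 1) x₀ = 0)
    (hmin : ∀ x : ℝ, kraw n (r + 1) x = 0 → x₀ ≤ x) :
    ∀ k ≤ r, ∀ x : ℝ, 0 ≤ x → x ≤ x₀ → 0 < kraw n k x := by
  classical
  have hrn : r + 1 ≤ n := by omega
  have hchoosepos : ∀ k, k ≤ r + 1 → 0 < n.choose k := fun k hk =>
    Nat.choose_pos (by omega)
  have hx0 : 0 < x₀ := root_pos n (r+1) hrn (hchoosepos _ le_rfl) x₀ hroot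
  by_contra hcon
  push_neg at hcon
  obtain ⟨k₁, hk₁, x₁, hx₁0, hx₁x, hk₁le⟩ := hcon
  set B : Set ℝ := Set.Icc 0 x₀ ∩ ⋃ k ∈ Finset.range (r + 1), {x | kraw n k x ≤ 0} with hB
  have hmem : ∀ x : ℝ, x ∈ B ↔ (0 ≤ x ∧ x ≤ x₀) ∧ ∃ k ≤ r, kraw n k x ≤ 0 := by
    intro x
    simp only [hB, Set.mem_inter_iff, Set.mem_Icc, Set.mem_iUnion, Set.mem_setOf_eq,
      Finset.mem_range, exists_prop]
    constructor
    · rintro ⟨h1, k, hk, h2⟩; exact ⟨h1, k, by omega, h2⟩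
    · rintro ⟨h1, k, hk, h2⟩; exact ⟨h1, k, by omega, h2⟩
  have hne : B.Nonempty := ⟨x₁, (hmem x₁).2 ⟨⟨hx₁0, hx₁x⟩, k₁, hk₁, hk₁le⟩⟩
  have hclosed : IsClosed B := by
    apply IsClosed.inter isClosed_Icc
    exact isClosed_biUnion_finset fun k _ => isClosed_le (continuous_kraw n k) continuous_const
  have hbdd : BddBelow B := ⟨0, fun x hx => ((hmem x).1 hx).1.1⟩
  set y := sInf B with hy
  have hyB : y ∈ B := hclosed.csInf_mem hne hbdd
  obtain ⟨⟨hy0, hyx0⟩, hyk⟩ := (hmem y).1 hyB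
  have hbelow : ∀ z : ℝ, 0 ≤ z → z < y → ∀ k ≤ r, 0 < kraw n k z := by
    intro z hz0 hzy k hk
    by_contra hc
    push_neg at hc
    have : z ∈ B := (hmem z).2 ⟨⟨hz0, le_trans hzy.le hyx0⟩, k, hk, hc⟩
    exact absurd (csInf_le hbdd this) (not_le.2 hzy)
  have hypos : 0 < y := by
    rcases hy0.lt_or_eq with h | h
    · exact h
    · exfalso
      obtain ⟨k, hk, hkle⟩ := hyk
      rw [← h, kraw_at_zero] at hkle
      have := hchoosepos k (by omega)
      exact absurd hkle (by push_neg; exact_mod_cast this)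
  have hge : ∀ k ≤ r + 1, 0 ≤ kraw n k y := by
    intro k hk
    by_contra hc
    push_neg at hc
    have h0 : (0:ℝ) < kraw n k 0 := by
      rw [kraw_at_zero]; exact_mod_cast hchoosepos k hk
    have hsub : Set.Icc (kraw n k y) (kraw n k 0) ⊆ (fun x => kraw n k x) '' Set.Icc 0 y :=
      intermediate_value_Icc' hy0 ((continuous_kraw n k).continuousOn)
    obtain ⟨z, hz, hzval0⟩ := hsub ⟨hc.le, h0.le⟩
    have hzval : kraw n k z = 0 := hzval0
    have hzny : z ≠ y := fun he => absurd (he ▸ hzval) (ne_of_lt hc)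
    have hzy : z < y := lt_of_le_of_ne hz.2 hzny
    rcases Nat.lt_or_ge k (r+1) with hkr | hkr
    · exact absurd hzval (ne_of_gt (hbelow z hz.1 hzy k (by omega)))
    · have hk1 : k = r + 1 := by omega
      rw [hk1] at hzval
      have := hmin z hzval
      linarith [hz.2, hyx0]
  -- minimal index with kraw ≤ 0 at y
  have hex : ∃ k, kraw n k y ≤ 0 ∧ k ≤ r := by
    obtain ⟨k, hk, hkle⟩ := hyk; exact ⟨k, hkle, hk⟩
  have hmle : kraw n (Nat.find hex) y ≤ 0 := (Nat.find_spec hex).1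
  have hmr : Nat.find hex ≤ r := (Nat.find_spec hex).2
  have hm0 : Nat.find hex ≠ 0 := by
    intro h
    rw [h, kraw_zero] at hmle
    linarith
  obtain ⟨t, ht⟩ : ∃ t, Nat.find hex = t + 1 := ⟨Nat.find hex - 1, by omega⟩
  have htr : t + 1 ≤ r := ht ▸ hmr
  have htpos : 0 < kraw n t y := by
    have hmin' := Nat.find_min hex (m := t) (by omega)
    push_neg at hmin'
    rcases (lt_or_ge 0 (kraw n t y)) with h | h
    · exact h
    · exact absurd (hmin' h) (by omega)
  have hmzero : kraw n (t + 1) y = 0 := by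
    rw [ht] at hmle
    exact le_antisymm hmle (hge (t+1) (by omega))
  have hrec := kraw_rec n t y
  have hnt : (0:ℝ) < (n:ℝ) - t := by
    have h1 : t < n := by omega
    have : (t:ℝ) < n := by exact_mod_cast h1
    linarith
  have hneg : kraw n (t + 2) y < 0 := by
    have ht2 : (0:ℝ) < (t:ℝ) + 2 := by positivity
    rw [hmzero] at hrec
    nlinarith [mul_pos hnt htpos]
  rcases Nat.lt_or_ge (t + 2) (r + 1) with h | h
  · exact absurd hneg (not_lt.2 (hge (t+2) (by omega)))
  · have ht2 : t + 2 = r + 1 := by omega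
    rw [ht2] at hneg
    -- IVT to find root below x₀
    have h0 : (0:ℝ) < kraw n (r+1) 0 := by
      rw [kraw_at_zero]; exact_mod_cast hchoosepos _ le_rfl
    have hsub : Set.Icc (kraw n (r+1) y) (kraw n (r+1) 0) ⊆
        (fun x => kraw n (r+1) x) '' Set.Icc 0 y :=
      intermediate_value_Icc' hy0 ((continuous_kraw n (r+1)).continuousOn)
    obtain ⟨z, hz, hzval0⟩ := hsub ⟨hneg.le, h0.le⟩
    have hzval : kraw n (r+1) z = 0 := hzval0
    have hzny : z ≠ y := fun he => absurd (he ▸ hzval) (ne_of_lt hneg)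
    have hzy : z < y := lt_of_le_of_ne hz.2 hzny
    have := hmin z hzval
    linarith

variable {n : ℕ}

lemma wt_pos (x : Fin n → Bool) (i : Fin n) (h : x i = true) : 0 < wt x :=
  Finset.card_pos.2 ⟨i, Finset.mem_filter.2 ⟨Finset.mem_univ i, h⟩⟩

lemma wt_le (x : Fin n → Bool) : wt x ≤ n :=
  le_trans (Finset.card_filter_le _ _) (by simp)

lemma wt_update_true (x : Fin n → Bool) (i : Fin n) (h : x i = false) :
    wt (Function.update x i true) = wt x + 1 := by
  unfold wt
  have hset : (Finset.univ.filter fun j => Function.update x i true j = true)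
      = insert i (Finset.univ.filter fun j => x j = true) := by
    ext j
    by_cases hj : j = i
    · subst hj; simp [Function.update_self]
    · simp [Function.update_of_ne hj, hj]
  rw [hset, Finset.card_insert_of_notMem (by simp [h])]

lemma wt_update_false (x : Fin n → Bool) (i : Fin n) (h : x i = true) :
    wt (Function.update x i false) = wt x - 1 := by
  unfold wt
  have hset : (Finset.univ.filter fun j => Function.update x i false j = true)
      = (Finset.univ.filter fun j => x j = true).erase i := by
    ext j
    by_cases hj : j = i
    · subst hj; simp [Function.update_self]
    · simp [Function.update_of_ne hj, hj]
  rw [hset, Finset.card_erase_of_mem (by simp [h])]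

lemma hammingDist_flip (x : Fin n → Bool) (i : Fin n) :
    hammingDist x (Function.update x i (!(x i))) = 1 := by
  have hset : (Finset.univ.filter fun j => x j ≠ Function.update x i (!(x i)) j) = {i} := by
    ext j
    by_cases hj : j = i
    · subst hj; simp [Function.update_self]
    · simp [Function.update_of_ne hj, hj]
  rw [hammingDist]
  convert congrArg Finset.card hset using 2
  simp

lemma eq_flip_of_dist_one (x y : Fin n → Bool) (h : hammingDist x y = 1) :
    ∃ i, y = Function.update x i (!(x i)) := by
  rw [hammingDist] at h
  obtain ⟨a, ha⟩ := Finset.card_eq_one.1 h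
  refine ⟨a, funext fun j => ?_⟩
  by_cases hj : j = a
  · subst hj
    have hmem : j ∈ (Finset.univ.filter fun i => x i ≠ y i) := by rw [ha]; simp
    have hne : x j ≠ y j := (Finset.mem_filter.1 hmem).2
    rw [Function.update_self]
    revert hne; cases x j <;> cases y j <;> simp
  · have hmem : j ∉ (Finset.univ.filter fun i => x i ≠ y i) := by rw [ha]; simp [hj]
    have : ¬ (x j ≠ y j) := by
      intro hc; exact hmem (Finset.mem_filter.2 ⟨Finset.mem_univ j, hc⟩)
    push_neg at this
    rw [Function.update_of_ne hj, this]

lemma ball_sum (r : ℕ) (g : ℕ → ℝ) (hg : g (r + 1) = 0)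
    (v : {x : Fin n → Bool // wt x ≤ r}) :
    ∑ w : {x : Fin n → Bool // wt x ≤ r},
        (if hammingDist v.1 w.1 = 1 then (1:ℝ) else 0) * g (wt w.1)
      = (wt v.1 : ℝ) * g (wt v.1 - 1) + ((n : ℝ) - wt v.1) * g (wt v.1 + 1) := by
  classical
  set G : (Fin n → Bool) → ℝ := fun y => if wt y ≤ r then g (wt y) else 0 with hG
  have step1 : ∑ w : {x : Fin n → Bool // wt x ≤ r},
      (if hammingDist v.1 w.1 = 1 then (1:ℝ) else 0) * g (wt w.1)
      = ∑ y ∈ Finset.univ.filter (fun y : Fin n → Bool => wt y ≤ r),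
          (if hammingDist v.1 y = 1 then (1:ℝ) else 0) * g (wt y) := by
    rw [Finset.sum_subtype (p := fun y : Fin n → Bool => wt y ≤ r)
      (f := fun y => (if hammingDist v.1 y = 1 then (1:ℝ) else 0) * g (wt y))]
    intro y; simp
  have step2 : ∑ y ∈ Finset.univ.filter (fun y : Fin n → Bool => wt y ≤ r),
      (if hammingDist v.1 y = 1 then (1:ℝ) else 0) * g (wt y)
      = ∑ y : Fin n → Bool, (if hammingDist v.1 y = 1 then (1:ℝ) else 0) * G y := by
    rw [Finset.sum_filter]
    apply Finset.sum_congr rfl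
    intro y _
    by_cases h1 : wt y ≤ r <;> by_cases h2 : hammingDist v.1 y = 1 <;> simp [hG, h1, h2]
  have step3 : ∑ y : Fin n → Bool, (if hammingDist v.1 y = 1 then (1:ℝ) else 0) * G y
      = ∑ y ∈ Finset.univ.filter (fun y : Fin n → Bool => hammingDist v.1 y = 1), G y := by
    rw [Finset.sum_filter]
    apply Finset.sum_congr rfl
    intro y _
    by_cases h2 : hammingDist v.1 y = 1 <;> simp [h2]
  have step4 : ∑ y ∈ Finset.univ.filter (fun y : Fin n → Bool => hammingDist v.1 y = 1), G y
      = ∑ i : Fin n, G (Function.update v.1 i (!(v.1 i))) := by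
    symm
    apply Finset.sum_bij (fun (i : Fin n) (_ : i ∈ Finset.univ) => Function.update v.1 i (!(v.1 i)))
    · intro i _
      exact Finset.mem_filter.2 ⟨Finset.mem_univ _, hammingDist_flip v.1 i⟩
    · intro i _ i' _ heq
      by_contra hne
      have h1 : Function.update v.1 i (!(v.1 i)) i = !(v.1 i) := Function.update_self _ _ _
      have h2 : Function.update v.1 i' (!(v.1 i')) i = v.1 i := Function.update_of_ne (Ne.symm (by exact fun hc => hne (by rw [hc]))) _ _
      rw [heq] at h1
      rw [h1] at h2
      exact (Bool.not_ne_self (v.1 i)) (by rw [h2])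
    · intro y hy
      obtain ⟨i, hi⟩ := eq_flip_of_dist_one v.1 y (Finset.mem_filter.1 hy).2
      exact ⟨i, Finset.mem_univ i, hi.symm⟩
    · intro i _; rfl
  have step5 : ∑ i : Fin n, G (Function.update v.1 i (!(v.1 i)))
      = (wt v.1 : ℝ) * g (wt v.1 - 1) + ((n : ℝ) - wt v.1) * g (wt v.1 + 1) := by
    rw [← Finset.sum_filter_add_sum_filter_not Finset.univ (fun i => v.1 i = true)]
    have hA : ∀ i ∈ Finset.univ.filter (fun i => v.1 i = true),
        G (Function.update v.1 i (!(v.1 i))) = g (wt v.1 - 1) := by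
      intro i hi
      have hvi : v.1 i = true := (Finset.mem_filter.1 hi).2
      have : (!(v.1 i)) = false := by rw [hvi]; rfl
      rw [this, hG]
      simp only
      rw [wt_update_false v.1 i hvi]
      rw [if_pos (le_trans (Nat.sub_le _ _) v.2)]
    have hB : ∀ i ∈ Finset.univ.filter (fun i => ¬ (v.1 i = true)),
        G (Function.update v.1 i (!(v.1 i))) = g (wt v.1 + 1) := by
      intro i hi
      have hvi : v.1 i = false := by
        have := (Finset.mem_filter.1 hi).2
        revert this; cases v.1 i <;> simp
      have : (!(v.1 i)) = true := by rw [hvi]; rfl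
      rw [this, hG]
      simp only
      rw [wt_update_true v.1 i hvi]
      by_cases hle : wt v.1 + 1 ≤ r
      · rw [if_pos hle]
      · rw [if_neg hle]
        have : wt v.1 = r := by omega
        rw [this, hg]
    rw [Finset.sum_congr rfl hA, Finset.sum_congr rfl hB, Finset.sum_const, Finset.sum_const]
    have hcard1 : (Finset.univ.filter fun i => v.1 i = true).card = wt v.1 := rfl
    have hcard2 : (Finset.univ.filter fun i => ¬ (v.1 i = true)).card = n - wt v.1 := by
      have := Finset.card_filter_add_card_filter_not (s := Finset.univ)
        (p := fun i : Fin n => v.1 i = true)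
      simp only [Finset.card_univ, Fintype.card_fin] at this
      omega
    rw [hcard1, hcard2]
    have : ((n - wt v.1 : ℕ) : ℝ) = (n : ℝ) - wt v.1 := by
      push_cast [Nat.cast_sub (wt_le v.1)]; ring
    simp [nsmul_eq_mul, this]
  rw [step1, step2, step3, step4, step5]

lemma choose_cast_succ (n t : ℕ) (h : t < n) :
    ((t : ℝ) + 1) * (n.choose (t + 1) : ℝ) = ((n : ℝ) - t) * (n.choose t : ℝ) := by
  have := Nat.choose_succ_right_eq n t
  have hc : ((n.choose (t+1) * (t+1) : ℕ) : ℝ) = ((n.choose t * (n - t) : ℕ) : ℝ) := by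
    exact_mod_cast congrArg (Nat.cast (R := ℝ)) this
  push_cast [Nat.cast_sub h.le] at hc
  linarith

lemma spherical_rec (n r : ℕ) (hrn : r + 1 ≤ n) (x : ℝ) (k : ℕ) (hk : k ≤ r) :
    (k : ℝ) * (kraw n (k - 1) x / (n.choose (k - 1) : ℝ))
      + ((n : ℝ) - k) * (kraw n (k + 1) x / (n.choose (k + 1) : ℝ))
      = ((n : ℝ) - 2 * x) * (kraw n k x / (n.choose k : ℝ)) := by
  have hchoose : ∀ m, m ≤ n → ((n.choose m : ℝ)) ≠ 0 := fun m hm =>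
    Nat.cast_ne_zero.2 (Nat.choose_pos hm).ne'
  rcases Nat.eq_zero_or_pos k with hk0 | hkpos
  · subst hk0
    simp only [Nat.cast_zero, zero_mul, zero_add, Nat.zero_sub, sub_zero, zero_add,
      Nat.choose_one_right, Nat.choose_zero_right, Nat.cast_one, kraw_zero, kraw_one]
    have hn0 : ((n:ℝ)) ≠ 0 := by
      have : 0 < n := by omega
      exact_mod_cast this.ne'
    field_simp
  · obtain ⟨t, rfl⟩ : ∃ t, k = t + 1 := ⟨k - 1, by omega⟩
    have ht1 : t < n := by omega
    have ht2 : t + 1 < n := by omega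
    have e1 := choose_cast_succ n t ht1
    have e2 := choose_cast_succ n (t + 1) ht2
    have hrec := kraw_rec n t x
    have hc0 := hchoose t (by omega)
    have hc1 := hchoose (t + 1) (by omega)
    have hc2 := hchoose (t + 2) (by omega)
    have hsimp : t + 1 - 1 = t := by omega
    rw [hsimp]
    have e2' : ((t:ℝ) + 2) * (n.choose (t + 2) : ℝ)
        = ((n : ℝ) - t - 1) * (n.choose (t+1) : ℝ) := by
      push_cast at e2 ⊢; linarith
    have ht2ne : ((t:ℝ) + 2) ≠ 0 := by positivity
    have key : ((t:ℝ) + 1) * kraw n t x * (n.choose (t+1) : ℝ) * (n.choose (t+2) : ℝ)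
        + ((n : ℝ) - (t + 1)) * kraw n (t + 2) x * (n.choose t : ℝ) * (n.choose (t+1) : ℝ)
        = ((n : ℝ) - 2 * x) * kraw n (t + 1) x * (n.choose t : ℝ) * (n.choose (t+2) : ℝ) := by
      apply mul_left_cancel₀ ht2ne
      linear_combination (kraw n t x * (n.choose (t+1) : ℝ) * ((t:ℝ)+1)
          - ((n:ℝ) - 2*x) * kraw n (t+1) x * (n.choose t : ℝ)) * e2'
        + kraw n t x * (n.choose (t+1) : ℝ) * ((n:ℝ) - (t:ℝ) - 1) * e1
        + ((n:ℝ) - (t:ℝ) - 1) * (n.choose t : ℝ) * (n.choose (t+1) : ℝ) * hrec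
    have hcast : ((t + 1 : ℕ) : ℝ) = (t : ℝ) + 1 := by push_cast; ring
    rw [hcast]
    field_simp
    linear_combination key

-- zero vector in the ball
def vzero (n r : ℕ) : {x : Fin n → Bool // wt x ≤ r} :=
  ⟨fun _ => false, by simp [wt]⟩

lemma wt_eq_zero {n : ℕ} (x : Fin n → Bool) (h : wt x = 0) : x = fun _ => false := by
  funext i
  cases hxi : x i
  · rfl
  · exact absurd h (wt_pos x i hxi).ne'

lemma mulVec_apply' {m : Type*} [Fintype m] (M : Matrix m m ℝ) (b : m → ℝ) (v : m) :
    M.mulVec b v = ∑ w, M v w * b w := rfl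

lemma ballAdj_symm (n r : ℕ) (v w : {x : Fin n → Bool // wt x ≤ r}) :
    ballAdj n r v w = ballAdj n r w v := by
  simp [ballAdj, hammingDist_comm]

lemma sum_mulVec_symm (n r : ℕ) (a b : {x : Fin n → Bool // wt x ≤ r} → ℝ) :
    ∑ v, a v * (ballAdj n r).mulVec b v = ∑ v, (ballAdj n r).mulVec a v * b v := by
  simp only [mulVec_apply']
  calc ∑ v, a v * ∑ w, ballAdj n r v w * b w
      = ∑ v, ∑ w, a v * (ballAdj n r v w * b w) := by
        apply Finset.sum_congr rfl; intro v _; rw [Finset.mul_sum]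
    _ = ∑ w, ∑ v, a v * (ballAdj n r v w * b w) := Finset.sum_comm
    _ = ∑ w, (∑ v, ballAdj n r w v * a v) * b w := by
        apply Finset.sum_congr rfl; intro w _
        rw [Finset.sum_mul]
        apply Finset.sum_congr rfl; intro v _
        rw [ballAdj_symm n r v w]; ring

lemma prop_zero (n r : ℕ) (μ : ℝ) (h : {x : Fin n → Bool // wt x ≤ r} → ℝ)
    (heq : (ballAdj n r).mulVec h = fun v => μ * h v)
    (hnn : ∀ v, 0 ≤ h v) (v₁ : {x : Fin n → Bool // wt x ≤ r}) (hz : h v₁ = 0) :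
    ∀ v, h v = 0 := by
  classical
  have spread : ∀ v, h v = 0 → ∀ w, hammingDist v.1 w.1 = 1 → h w = 0 := by
    intro v hv w hw
    have h0 : ∑ w', ballAdj n r v w' * h w' = 0 := by
      rw [← mulVec_apply', congrFun heq v, hv, mul_zero]
    have hterm := (Finset.sum_eq_zero_iff_of_nonneg (fun w' _ => by
      unfold ballAdj
      by_cases hd : hammingDist v.1 w'.1 = 1
      · simp [hd]; exact hnn w'
      · simp [hd])).1 h0 w (Finset.mem_univ w)
    simpa [ballAdj, hw] using hterm
  have exists_true : ∀ v : {x : Fin n → Bool // wt x ≤ r}, 0 < wt v.1 →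
      ∃ i, v.1 i = true := by
    intro v hpos
    obtain ⟨i, hi⟩ := Finset.card_pos.mp hpos
    exact ⟨i, (Finset.mem_filter.1 hi).2⟩
  have hflipdist : ∀ (x : Fin n → Bool) (i : Fin n), x i = true →
      hammingDist x (Function.update x i false) = 1 := by
    intro x i hxi
    have := hammingDist_flip x i
    rwa [show (!(x i)) = false by rw [hxi]; rfl] at this
  have down : ∀ k, ∀ v : {x : Fin n → Bool // wt x ≤ r}, wt v.1 = k → h v = 0 →
      h (vzero n r) = 0 := by
    intro k
    induction k using Nat.strong_induction_on with
    | _ k ih =>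
      intro v hk hv
      rcases Nat.eq_zero_or_pos k with h0 | hpos
      · have : v = vzero n r := Subtype.ext (wt_eq_zero v.1 (by omega))
        rw [← this]; exact hv
      · obtain ⟨i, hvi⟩ := exists_true v (hk ▸ hpos)
        set w : {x : Fin n → Bool // wt x ≤ r} :=
          ⟨Function.update v.1 i false, by rw [wt_update_false v.1 i hvi]; omega⟩ with hwdef
        have hw0 : h w = 0 := spread v hv w (hflipdist v.1 i hvi)
        exact ih (k - 1) (by omega) w (by rw [hwdef]; rw [wt_update_false v.1 i hvi, hk]) hw0
  have up : ∀ k, k ≤ r → ∀ v : {x : Fin n → Bool // wt x ≤ r}, wt v.1 = k → h v = 0 := by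
    intro k
    induction k with
    | zero =>
      intro _ v hv
      have : v = vzero n r := Subtype.ext (wt_eq_zero v.1 hv)
      rw [this]
      exact down (wt v₁.1) v₁ rfl hz
    | succ k ih =>
      intro hk v hv
      obtain ⟨i, hvi⟩ := exists_true v (by omega)
      set w : {x : Fin n → Bool // wt x ≤ r} :=
        ⟨Function.update v.1 i false, by rw [wt_update_false v.1 i hvi]; omega⟩ with hwdef
      have hww : wt w.1 = k := by rw [hwdef]; rw [wt_update_false v.1 i hvi, hv]; omega
      have hw0 : h w = 0 := ih (by omega) w hww
      have hwi : w.1 i = false := by rw [hwdef]; exact Function.update_self i false v.1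
      have hveq : v.1 = Function.update w.1 i (!(w.1 i)) := by
        have hnot : (!(w.1 i)) = true := by rw [hwi]; rfl
        rw [hnot]
        funext j
        by_cases hj : j = i
        · subst hj; rw [Function.update_self]; exact hvi
        · rw [Function.update_of_ne hj, hwdef]
          exact (Function.update_of_ne hj false v.1).symm
      exact spread w hw0 v (by rw [hveq]; exact hammingDist_flip w.1 i)
  intro v
  exact up (wt v.1) v.2 v rfl

theorem ball_max_eigenvalue (n r : ℕ) (hn : 0 < n) (hr : 2 * r ≤ n)
    (x₀ : ℝ) (hroot : kraw n (r + 1) x₀ = 0)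
    (hmin : ∀ x : ℝ, kraw n (r + 1) x = 0 → x₀ ≤ x) :
    Module.End.HasEigenvalue (Matrix.toLin' (ballAdj n r)) ((n : ℝ) - 2 * x₀) ∧
    (∀ μ : ℝ, Module.End.HasEigenvalue (Matrix.toLin' (ballAdj n r)) μ →
      μ ≤ (n : ℝ) - 2 * x₀) ∧
    Module.finrank ℝ
      (Module.End.eigenspace (Matrix.toLin' (ballAdj n r)) ((n : ℝ) - 2 * x₀)) = 1 ∧
    ∃ f ∈ Module.End.eigenspace (Matrix.toLin' (ballAdj n r)) ((n : ℝ) - 2 * x₀),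
      (∀ v, 0 < f v) ∧ ∀ v w, wt v.1 = wt w.1 → f v = f w := by
  classical
  have hrn : r + 1 ≤ n := by omega
  set μ : ℝ := (n : ℝ) - 2 * x₀ with hμdef
  set g : ℕ → ℝ := fun k => kraw n k x₀ / (n.choose k : ℝ) with hgdef
  set f : {x : Fin n → Bool // wt x ≤ r} → ℝ := fun v => g (wt v.1) with hfdef
  have hx0 : 0 < x₀ := root_pos n (r + 1) hrn (Nat.choose_pos hrn) x₀ hroot
  have hgpos : ∀ k, k ≤ r → 0 < g k := by
    intro k hk
    apply div_pos (kraw_pos_on n r hn hr x₀ hroot hmin k hk x₀ hx0.le le_rfl)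
    exact_mod_cast Nat.choose_pos (by omega)
  have hg0 : g (r + 1) = 0 := by rw [hgdef]; simp [hroot]
  have hfpos : ∀ v, 0 < f v := fun v => hgpos _ v.2
  have hfne : f ≠ 0 := fun h => absurd (congrFun h (vzero n r)) (ne_of_gt (hfpos (vzero n r)))
  have hsph : ∀ k, k ≤ r → (k : ℝ) * g (k - 1) + ((n : ℝ) - k) * g (k + 1) = μ * g k :=
    fun k hk => spherical_rec n r hrn x₀ k hk
  have hmul : (ballAdj n r).mulVec f = fun v => μ * f v := by
    funext v
    have hb := ball_sum (n := n) r g hg0 v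
    have h1 : (ballAdj n r).mulVec f v
        = ∑ w : {x : Fin n → Bool // wt x ≤ r},
            (if hammingDist v.1 w.1 = 1 then (1:ℝ) else 0) * g (wt w.1) := by
      rw [mulVec_apply']
      apply Finset.sum_congr rfl
      intro w _
      rfl
    rw [h1, hb]
    exact hsph (wt v.1) v.2
  have hmemEig : f ∈ Module.End.eigenspace (Matrix.toLin' (ballAdj n r)) μ := by
    rw [Module.End.mem_eigenspace_iff, Matrix.toLin'_apply, hmul]
    funext v
    simp [smul_eq_mul]
  refine ⟨?_, ?_, ?_, ?_⟩
  · exact Module.End.hasEigenvalue_of_hasEigenvector ⟨hmemEig, hfne⟩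
  · -- maximality
    intro μ' hμ'
    obtain ⟨u, humem, hune⟩ := hμ'.exists_hasEigenvector
    have humul : (ballAdj n r).mulVec u = fun v => μ' * u v := by
      rw [Module.End.mem_eigenspace_iff] at humem
      rw [← Matrix.toLin'_apply, humem]
      funext v; simp [smul_eq_mul]
    set habs : {x : Fin n → Bool // wt x ≤ r} → ℝ := fun v => |u v| with habsdef
    have hABS : ∀ v, |μ'| * habs v ≤ (ballAdj n r).mulVec habs v := by
      intro v
      have hv : μ' * u v = ∑ w, ballAdj n r v w * u w := by
        rw [← mulVec_apply', congrFun humul v]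
      calc |μ'| * habs v = |μ' * u v| := by rw [habsdef]; simp [abs_mul]
        _ = |∑ w, ballAdj n r v w * u w| := by rw [hv]
        _ ≤ ∑ w, |ballAdj n r v w * u w| := Finset.abs_sum_le_sum_abs _ _
        _ = ∑ w, ballAdj n r v w * habs w := by
            apply Finset.sum_congr rfl
            intro w _
            rw [abs_mul, habsdef]
            congr 1
            unfold ballAdj
            by_cases hd : hammingDist v.1 w.1 = 1 <;> simp [hd]
        _ = (ballAdj n r).mulVec habs v := (mulVec_apply' _ _ _).symm
    have hupos : ∃ v, u v ≠ 0 := by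
      by_contra hc
      push_neg at hc
      exact hune (funext hc)
    obtain ⟨vp, hvp⟩ := hupos
    have hS : 0 < ∑ v, f v * habs v := by
      apply Finset.sum_pos' (fun v _ => mul_nonneg (hfpos v).le (abs_nonneg _))
      exact ⟨vp, Finset.mem_univ vp, mul_pos (hfpos vp) (abs_pos.2 hvp)⟩
    have hkey : |μ'| * ∑ v, f v * habs v ≤ μ * ∑ v, f v * habs v := by
      calc |μ'| * ∑ v, f v * habs v = ∑ v, f v * (|μ'| * habs v) := by
            rw [Finset.mul_sum]; apply Finset.sum_congr rfl; intro v _; ring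
        _ ≤ ∑ v, f v * (ballAdj n r).mulVec habs v :=
            Finset.sum_le_sum fun v _ => mul_le_mul_of_nonneg_left (hABS v) (hfpos v).le
        _ = ∑ v, (ballAdj n r).mulVec f v * habs v := sum_mulVec_symm n r f habs
        _ = ∑ v, μ * (f v * habs v) := by
            apply Finset.sum_congr rfl; intro v _; rw [congrFun hmul v]; ring
        _ = μ * ∑ v, f v * habs v := (Finset.mul_sum _ _ _).symm
    exact le_trans (le_abs_self μ') (le_of_mul_le_mul_right hkey hS)
  · -- multiplicity one
    have heigeq : Module.End.eigenspace (Matrix.toLin' (ballAdj n r)) μ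
        = Submodule.span ℝ {f} := by
      apply le_antisymm
      · intro u hu
        obtain ⟨v₁, _, hv₁min⟩ := Finset.exists_min_image Finset.univ
          (fun v => u v / f v) ⟨vzero n r, Finset.mem_univ _⟩
        set c : ℝ := u v₁ / f v₁ with hcdef
        have hmemh : u - c • f ∈ Module.End.eigenspace (Matrix.toLin' (ballAdj n r)) μ :=
          Submodule.sub_mem _ hu (Submodule.smul_mem _ c hmemEig)
        have hmulh : (ballAdj n r).mulVec (u - c • f) = fun v => μ * (u - c • f) v := by
          rw [Module.End.mem_eigenspace_iff] at hmemh
          rw [← Matrix.toLin'_apply, hmemh]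
          funext v; simp [smul_eq_mul]
        have hnn : ∀ v, 0 ≤ (u - c • f) v := by
          intro v
          have h1 : c ≤ u v / f v := hv₁min v (Finset.mem_univ v)
          have h2 : c * f v ≤ u v := (le_div_iff₀ (hfpos v)).1 h1
          simp only [Pi.sub_apply, Pi.smul_apply, smul_eq_mul]
          linarith
        have hz1 : (u - c • f) v₁ = 0 := by
          simp only [Pi.sub_apply, Pi.smul_apply, smul_eq_mul, hcdef]
          rw [div_mul_cancel₀ _ (hfpos v₁).ne']
          ring
        have hzero := prop_zero n r μ (u - c • f) hmulh hnn v₁ hz1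
        have : u = c • f := by
          have h0 : u - c • f = 0 := funext fun v => hzero v
          exact sub_eq_zero.1 h0
        exact Submodule.mem_span_singleton.2 ⟨c, this.symm⟩
      · rw [Submodule.span_le, Set.singleton_subset_iff]
        exact hmemEig
    rw [heigeq]
    exact finrank_span_singleton hfne
  · exact ⟨f, hmemEig, hfpos, fun v w hw => by rw [hfdef]; simp only; rw [hw]⟩
end

section
/- Let C be the \binom{n}{r-1} \times \binom{n}{r} inclusion matrix whose rows are indexed by (r-1)-subsets and columns by r-subsets of an n-set, with C_{y,x} = 1 iff y \subseteq x. If r \le (n+1)/2, then C has full rank \binom{n}{r-1}. -/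
/-- The inclusion matrix between `(r-1)`-subsets and `r`-subsets of an `n`-set. -/
def inclusionMatrix (n r : ℕ) :
    Matrix {s : Finset (Fin n) // s.card = r - 1} {s : Finset (Fin n) // s.card = r} ℚ :=
  fun y x => if y.1 ⊆ x.1 then 1 else 0

section aux

open Matrix

variable {n : ℕ}

lemma IM.filter_subsets_card (w : Finset (Fin n)) (m : ℕ) :
    (Finset.univ.filter fun z : Finset (Fin n) => z.card = m ∧ z ⊆ w).card
      = w.card.choose m := by
  rw [← Finset.card_powersetCard m w]
  congr 1
  ext z
  simp [Finset.mem_powersetCard, and_comm]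

lemma IM.filter_supersets_card (y : Finset (Fin n)) (m : ℕ) (h : y.card ≤ m) :
    (Finset.univ.filter fun x : Finset (Fin n) => x.card = m ∧ y ⊆ x).card
      = (n - y.card).choose (m - y.card) := by
  have hcompl : (Finset.univ \ y).card = n - y.card := by
    rw [Finset.card_sdiff_of_subset (Finset.subset_univ y), Finset.card_univ, Fintype.card_fin]
  rw [← hcompl, ← Finset.card_powersetCard]
  refine Finset.card_nbij' (fun x => x \ y) (fun w => w ∪ y) ?_ ?_ ?_ ?_
  · intro x hx
    simp only [Finset.mem_coe, Finset.mem_filter, Finset.mem_univ, true_and] at hx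
    obtain ⟨hc, hs⟩ := hx
    rw [Finset.mem_coe, Finset.mem_powersetCard]
    refine ⟨Finset.sdiff_subset_sdiff (Finset.subset_univ x) le_rfl, ?_⟩
    rw [Finset.card_sdiff_of_subset hs, hc]
  · intro w hw
    rw [Finset.mem_coe, Finset.mem_powersetCard] at hw
    obtain ⟨hs, hc⟩ := hw
    have hdisj : Disjoint w y := by
      rw [Finset.disjoint_left]
      intro a haw hay
      have h1 := hs haw
      simp only [Finset.mem_sdiff] at h1
      exact h1.2 hay
    simp only [Finset.mem_coe, Finset.mem_filter, Finset.mem_univ, true_and]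
    refine ⟨?_, Finset.subset_union_right⟩
    rw [Finset.card_union_of_disjoint hdisj, hc]
    omega
  · intro x hx
    simp only [Finset.mem_coe, Finset.mem_filter, Finset.mem_univ, true_and] at hx
    exact Finset.sdiff_union_of_subset hx.2
  · intro w hw
    rw [Finset.mem_coe, Finset.mem_powersetCard] at hw
    apply Finset.union_sdiff_cancel_right
    rw [Finset.disjoint_left]
    intro a haw hay
    have h1 := hw.1 haw
    simp only [Finset.mem_sdiff] at h1
    exact h1.2 hay

/-- Sum over the subtype of `m`-sets of an indicator equals a filter count. -/
lemma IM.sum_indicator (m : ℕ) (p : Finset (Fin n) → Prop) [DecidablePred p] :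
    (∑ x : {s : Finset (Fin n) // s.card = m}, if p x.1 then (1 : ℚ) else 0)
      = ((Finset.univ.filter fun x : Finset (Fin n) => x.card = m ∧ p x).card : ℚ) := by
  rw [← Finset.sum_subtype (Finset.univ.filter fun s : Finset (Fin n) => s.card = m)
      (by intro x; simp) (fun x => if p x then (1 : ℚ) else 0)]
  rw [Finset.sum_boole, Finset.filter_filter]

lemma IM.choose_pred (k : ℕ) (hk : 1 ≤ k) : k.choose (k - 1) = k := by
  have h := Nat.choose_symm (show k - 1 ≤ k by omega)
  rw [show k - (k - 1) = 1 by omega] at h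
  rw [← h, Nat.choose_one_right]

/-- The key counting identity, entrywise, for `k ≥ 1`. -/
lemma IM.count_identity {k : ℕ} (hk : 1 ≤ k) (hn : 2 * k + 1 ≤ n)
    (y y' : Finset (Fin n)) (hy : y.card = k) (hy' : y'.card = k) :
    ((Finset.univ.filter fun x : Finset (Fin n) => x.card = k + 1 ∧ (y ⊆ x ∧ y' ⊆ x)).card : ℚ)
      = ((Finset.univ.filter fun z : Finset (Fin n) => z.card = k - 1 ∧ (z ⊆ y ∧ z ⊆ y')).card : ℚ)
        + (if y = y' then ((n : ℚ) - 2 * k) else 0) := by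
  have hsub : (Finset.univ.filter fun z : Finset (Fin n) => z.card = k - 1 ∧ (z ⊆ y ∧ z ⊆ y'))
      = Finset.univ.filter fun z : Finset (Fin n) => z.card = k - 1 ∧ z ⊆ y ∩ y' := by
    ext z; simp [Finset.subset_inter_iff]
  have hsup : (Finset.univ.filter fun x : Finset (Fin n) => x.card = k + 1 ∧ (y ⊆ x ∧ y' ⊆ x))
      = Finset.univ.filter fun x : Finset (Fin n) => x.card = k + 1 ∧ y ∪ y' ⊆ x := by
    ext x; simp [Finset.union_subset_iff]
  rw [hsub, hsup, IM.filter_subsets_card]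
  by_cases h : y = y'
  · subst h
    simp only [Finset.union_self, Finset.inter_self, hy, if_pos rfl]
    rw [IM.filter_supersets_card y (k + 1) (by omega), hy,
      show k + 1 - k = 1 by omega, Nat.choose_one_right, IM.choose_pred k hk]
    have hkn : k ≤ n := by omega
    push_cast [Nat.cast_sub hkn]
    ring
  · simp only [if_neg h, add_zero]
    have hcard : (y ∪ y').card + (y ∩ y').card = 2 * k := by
      rw [Finset.card_union_add_card_inter, hy, hy']; omega
    have hlt : (y ∩ y').card < k := by
      rcases lt_or_eq_of_le
          (le_trans (Finset.card_le_card Finset.inter_subset_left) hy.le) with h' | h'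
      · exact h'
      · exfalso
        have e1 : y ∩ y' = y :=
          Finset.eq_of_subset_of_card_le Finset.inter_subset_left (by omega)
        have e2 : y ∩ y' = y' :=
          Finset.eq_of_subset_of_card_le Finset.inter_subset_right (by omega)
        exact h (e1 ▸ e2)
    by_cases hc : (y ∩ y').card = k - 1
    · have hu : (y ∪ y').card = k + 1 := by omega
      rw [IM.filter_supersets_card (y ∪ y') (k + 1) (by omega), hu, hc]
      simp
    · have hz : (Finset.univ.filter fun x : Finset (Fin n) =>
          x.card = k + 1 ∧ y ∪ y' ⊆ x) = ∅ := by
        rw [Finset.filter_eq_empty_iff]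
        rintro x - ⟨hxc, hxs⟩
        have := Finset.card_le_card hxs
        omega
      rw [hz]
      have h0 : (y ∩ y').card.choose (k - 1) = 0 :=
        Nat.choose_eq_zero_of_lt (by omega)
      simp [h0]

/-- A matrix with positive-definite quadratic form has full rank. -/
lemma IM.rank_of_posdef {m : Type*} [Fintype m] [DecidableEq m] (A : Matrix m m ℚ)
    (h : ∀ v : m → ℚ, v ≠ 0 → 0 < v ⬝ᵥ (A *ᵥ v)) : A.rank = Fintype.card m := by
  have hinj : Function.Injective A.mulVecLin := by
    rw [← LinearMap.ker_eq_bot, LinearMap.ker_eq_bot']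
    intro v hv
    by_contra hne
    have hpos := h v hne
    rw [Matrix.mulVecLin_apply] at hv
    rw [hv, dotProduct_zero] at hpos
    exact lt_irrefl 0 hpos
  rw [Matrix.rank, LinearMap.finrank_range_of_inj hinj,
    Module.finrank_fintype_fun_eq_card]

lemma IM.dotProduct_self_nonneg' {m : Type*} [Fintype m] (v : m → ℚ) :
    0 ≤ v ⬝ᵥ v :=
  Finset.sum_nonneg fun i _ => mul_self_nonneg (v i)

lemma IM.dotProduct_self_pos' {m : Type*} [Fintype m] (v : m → ℚ) (hv : v ≠ 0) :
    0 < v ⬝ᵥ v := by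
  obtain ⟨i, hi⟩ := Function.ne_iff.mp hv
  calc (0 : ℚ) < v i * v i := mul_self_pos.mpr hi
    _ ≤ ∑ j, v j * v j :=
      Finset.single_le_sum (fun j _ => mul_self_nonneg (v j)) (Finset.mem_univ i)

end aux

open Matrix in
theorem inclusionMatrix_full_rank (n r : ℕ) (hr1 : 1 ≤ r) (hr : 2 * r ≤ n + 1) :
    (inclusionMatrix n r).rank = Nat.choose n (r - 1) := by
  classical
  obtain ⟨k, rfl⟩ : ∃ k, r = k + 1 := ⟨r - 1, by omega⟩
  set C := inclusionMatrix n (k + 1) with hC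
  have key : (C * Cᵀ).rank = Fintype.card {s : Finset (Fin n) // s.card = (k + 1) - 1} := by
    apply IM.rank_of_posdef
    intro v hv
    rcases Nat.eq_zero_or_pos k with rfl | hk
    · -- r = 1 : C * Cᵀ = n • 1
      have hn1 : 1 ≤ n := by omega
      have hCCt : C * Cᵀ = (n : ℚ) • 1 := by
        ext y y'
        have hyy : y = y' := Subtype.ext (by
          rw [Finset.card_eq_zero.mp y.2, Finset.card_eq_zero.mp y'.2])
        subst hyy
        rw [Matrix.mul_apply]
        have hy0 : y.1 = ∅ := Finset.card_eq_zero.mp y.2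
        have hterm : ∀ x : {s : Finset (Fin n) // s.card = 0 + 1},
            Cᵀ x y = C y x := fun x => rfl
        have : (∑ x : {s : Finset (Fin n) // s.card = 0 + 1}, C y x * Cᵀ x y)
            = ∑ x : {s : Finset (Fin n) // s.card = 0 + 1},
              (if (∅ : Finset (Fin n)) ⊆ x.1 then (1 : ℚ) else 0) := by
          apply Finset.sum_congr rfl
          intro x _
          rw [hterm x]
          simp only [hC, inclusionMatrix, hy0]
          split <;> norm_num
        rw [this]
        rw [IM.sum_indicator (0 + 1) (fun x => (∅ : Finset (Fin n)) ⊆ x)]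
        have hfull : (Finset.univ.filter fun x : Finset (Fin n) =>
            x.card = 0 + 1 ∧ (∅ : Finset (Fin n)) ⊆ x)
            = Finset.univ.filter fun x : Finset (Fin n) => x.card = 1 := by
          ext x; simp
        rw [hfull]
        have hcount : (Finset.univ.filter fun x : Finset (Fin n) => x.card = 1).card
            = n.choose 1 := by
          rw [← Fintype.card_subtype, Fintype.card_finset_len, Fintype.card_fin]
        rw [hcount, Nat.choose_one_right]
        rw [Matrix.smul_apply, Matrix.one_apply_eq, smul_eq_mul, mul_one]
      rw [hCCt, Matrix.smul_mulVec, Matrix.one_mulVec, dotProduct_smul,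
        smul_eq_mul]
      have := IM.dotProduct_self_pos' v hv
      positivity
    · -- k ≥ 1
      set M := inclusionMatrix n k with hM
      have hnk : 2 * k + 1 ≤ n := by omega
      have hCCt : C * Cᵀ = Mᵀ * M + ((n : ℚ) - 2 * k) • 1 := by
        ext y y'
        rw [Matrix.mul_apply, Matrix.add_apply, Matrix.mul_apply]
        have hL : (∑ x : {s : Finset (Fin n) // s.card = k + 1}, C y x * Cᵀ x y')
            = ∑ x : {s : Finset (Fin n) // s.card = k + 1},
              (if y.1 ⊆ x.1 ∧ y'.1 ⊆ x.1 then (1 : ℚ) else 0) := by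
          apply Finset.sum_congr rfl
          intro x _
          show (if y.1 ⊆ x.1 then (1:ℚ) else 0) * (if y'.1 ⊆ x.1 then (1:ℚ) else 0) = _
          by_cases h1 : y.1 ⊆ x.1 <;> by_cases h2 : y'.1 ⊆ x.1 <;>
            simp [h1, h2]
        have hR : (∑ z : {s : Finset (Fin n) // s.card = k - 1}, Mᵀ y z * M z y')
            = ∑ z : {s : Finset (Fin n) // s.card = k - 1},
              (if z.1 ⊆ y.1 ∧ z.1 ⊆ y'.1 then (1 : ℚ) else 0) := by
          apply Finset.sum_congr rfl
          intro z _
          show (if z.1 ⊆ y.1 then (1:ℚ) else 0) * (if z.1 ⊆ y'.1 then (1:ℚ) else 0) = _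
          by_cases h1 : z.1 ⊆ y.1 <;> by_cases h2 : z.1 ⊆ y'.1 <;>
            simp [h1, h2]
        rw [hL, hR,
          IM.sum_indicator (k + 1) (fun x => y.1 ⊆ x ∧ y'.1 ⊆ x),
          IM.sum_indicator (k - 1) (fun z => z ⊆ y.1 ∧ z ⊆ y'.1)]
        have hid := IM.count_identity hk hnk y.1 y'.1 y.2 y'.2
        rw [hid]
        congr 1
        rw [Matrix.smul_apply]
        by_cases h : y = y'
        · subst h
          rw [if_pos rfl, Matrix.one_apply_eq, smul_eq_mul, mul_one]
        · rw [if_neg (fun hh => h (Subtype.ext hh)), Matrix.one_apply_ne h,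
            smul_eq_mul, mul_zero]
      rw [hCCt, Matrix.add_mulVec, dotProduct_add]
      have h1 : v ⬝ᵥ ((Mᵀ * M) *ᵥ v) = (M *ᵥ v) ⬝ᵥ (M *ᵥ v) := by
        rw [← Matrix.mulVec_mulVec, Matrix.dotProduct_mulVec, Matrix.vecMul_transpose]
      have h2 : v ⬝ᵥ ((((n : ℚ) - 2 * k) • 1) *ᵥ v) = ((n : ℚ) - 2 * k) * (v ⬝ᵥ v) := by
        rw [Matrix.smul_mulVec, Matrix.one_mulVec, dotProduct_smul, smul_eq_mul]
      rw [h1, h2]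
      have hb := IM.dotProduct_self_nonneg' (M *ᵥ v)
      have hp := IM.dotProduct_self_pos' v hv
      have hcpos : (0 : ℚ) < (n : ℚ) - 2 * k := by
        have : (2 * k + 1 : ℚ) ≤ n := by exact_mod_cast hnk
        linarith
      nlinarith
  rw [Matrix.rank_self_mul_transpose] at key
  rw [key, Fintype.card_finset_len, Fintype.card_fin]
end
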